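/- For integers m ≥ 1 and j ≥ 0, the sum ∑_{k=1}^{j} (-1)^k · C(m, j+k) · (m + (1-2k) · C(m, j-k+1)) equals 0, where binomial coefficients with out-of-range arguments are 0. -/

import Mathlib

open Polynomial Finset

lemma coeff_pow_gen (a : ℤ) (d m n : ℕ) (hd : 0 < d) :
    ((1 + C a * X^d : Polynomial ℤ)^m).coeff n
      = if d ∣ n then a^(n/d) * m.choose (n/d) else 0 := by
  rw [add_comm, add_pow, finset_sum_coeff]
  have h1 : ∀ k ∈ range (m+1), ((C a * X^d)^k * (1:Polynomial ℤ)^(m-k) * (m.choose k : Polynomial ℤ)).coeff n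
      = if k = n / d ∧ d ∣ n then a^(n/d) * m.choose (n/d) else 0 := by
    intro k _
    rw [one_pow, mul_one, mul_pow, ← C_pow, ← pow_mul, ← C_eq_natCast, mul_comm, ← mul_assoc, ← C_mul,
      coeff_C_mul, coeff_X_pow]
    by_cases hc : n = d * k
    · have hdvd : d ∣ n := ⟨k, hc⟩
      have hk : k = n / d := by rw [hc, Nat.mul_div_cancel_left _ hd]
      rw [if_pos hc, if_pos ⟨hk, hdvd⟩, ← hk]
      ring
    · rw [if_neg hc, if_neg, mul_zero]
      rintro ⟨rfl, hdvd⟩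
      exact hc (Nat.mul_div_cancel' hdvd).symm
  rw [Finset.sum_congr rfl h1]
  by_cases h : d ∣ n
  · simp only [h, and_true]
    by_cases hs : n / d ≤ m
    · rw [Finset.sum_ite_eq' (range (m+1)) (n/d)]
      simp [h, Finset.mem_range, Nat.lt_succ_iff.mpr hs]
    · have : m.choose (n/d) = 0 := Nat.choose_eq_zero_of_lt (by omega)
      simp only [this, Nat.cast_zero, mul_zero, if_true, eq_self_iff_true]
      simp
  · simp only [h, and_false, if_false, Finset.sum_const_zero, if_neg h]

lemma coeff_one_sub_X (m k : ℕ) : ((1 - X : Polynomial ℤ)^m).coeff k = (-1:ℤ)^k * m.choose k := by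
  have h : (1 - X : Polynomial ℤ) = 1 + C (-1) * X^1 := by simp; ring
  rw [h, coeff_pow_gen (-1) 1 m k one_pos]
  simp

lemma coeff_one_sub_X_sq (m n : ℕ) :
    ((1 - X^2 : Polynomial ℤ)^m).coeff n = if 2 ∣ n then (-1:ℤ)^(n/2) * m.choose (n/2) else 0 := by
  have h : (1 - X^2 : Polynomial ℤ) = 1 + C (-1) * X^2 := by simp; ring
  rw [h, coeff_pow_gen (-1) 2 m n two_pos]

-- convolution: ∑ over range (n+1)
lemma conv_eq_coeff (M2 m n : ℕ) :
    ∑ i ∈ range (n+1), (-1:ℤ)^i * M2.choose i * m.choose (n - i)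
      = ((1 - X : Polynomial ℤ)^M2 * (1 + X)^m).coeff n := by
  rw [Polynomial.coeff_mul, Finset.Nat.sum_antidiagonal_eq_sum_range_succ_mk]
  apply Finset.sum_congr rfl
  intro i _
  rw [coeff_one_sub_X, coeff_one_add_X_pow]

lemma conv_odd (m j : ℕ) :
    ∑ i ∈ range (2*j+2), (-1:ℤ)^i * m.choose i * m.choose (2*j+1 - i) = 0 := by
  have h2 : (2*j+2) = (2*j+1)+1 := by ring
  rw [h2, conv_eq_coeff]
  have : ((1 - X : Polynomial ℤ)^m * (1 + X)^m) = (1 - X^2)^m := by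
    rw [← mul_pow]; ring_nf
  rw [this, coeff_one_sub_X_sq, if_neg (by omega)]

lemma conv_even (M j : ℕ) :
    ∑ i ∈ range (2*j+1), (-1:ℤ)^i * M.choose i * (M+1).choose (2*j - i) = (-1:ℤ)^j * M.choose j := by
  have h2 : (2*j+1) = (2*j)+1 := by ring
  rw [h2, conv_eq_coeff]
  have : ((1 - X : Polynomial ℤ)^M * (1 + X)^(M+1)) = (1 - X^2)^M * (1 + X) := by
    rw [pow_succ, ← mul_assoc, ← mul_pow]
    ring_nf
  rw [this, mul_add, mul_one, Polynomial.coeff_add, coeff_one_sub_X_sq,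
    if_pos ⟨j, by ring⟩]
  have hj : 2*j/2 = j := by omega
  rw [hj]
  cases j with
  | zero => simp
  | succ j' =>
    have : ((1 - X^2 : Polynomial ℤ)^M * X).coeff (2*(j'+1)) = ((1-X^2:Polynomial ℤ)^M).coeff (2*j'+1) := by
      have h3 : 2*(j'+1) = (2*j'+1)+1 := by ring
      rw [h3, Polynomial.coeff_mul_X]
    rw [this, coeff_one_sub_X_sq, if_neg (by omega), add_zero]

lemma alt_sum (M : ℕ) : ∀ t : ℕ, ∑ i ∈ range (t+1), (-1:ℤ)^i * (M+1).choose i = (-1)^t * M.choose t := by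
  intro t
  induction t with
  | zero => simp
  | succ t ih =>
    rw [Finset.sum_range_succ, ih, Nat.choose_succ_succ']
    push_cast
    ring

lemma sq1 (j : ℕ) : (-1:ℤ)^j * (-1:ℤ)^j = 1 := by
  rw [← pow_add]; exact Even.neg_one_pow ⟨j, rfl⟩

-- sign helper
lemma np (k a n : ℕ) (h : k + a = n) : (-1:ℤ)^a = (-1:ℤ)^n * (-1)^k := by
  subst h
  rw [pow_add]
  linear_combination (-(-1:ℤ)^a) * sq1 k

lemma np_even (n : ℕ) : (-1:ℤ)^(2*n) = 1 := Even.neg_one_pow ⟨n, by ring⟩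

-- A-sum
lemma A_sum (M j : ℕ) :
    ∑ k ∈ Finset.Icc 1 j, (-1:ℤ)^k * (M+1).choose (j+k)
      = (-1:ℤ)^j * M.choose (2*j) - M.choose j := by
  have e1 : Finset.Icc 1 j = Finset.Ico 1 (j+1) := by rw [Finset.Ico_add_one_right_eq_Icc]
  rw [e1, Finset.sum_Ico_eq_sum_range]
  have e2 : ∑ i ∈ Finset.Ico (j+1) (2*j+1), (-1:ℤ)^i * (M+1).choose i
      = (-1:ℤ)^(2*j) * M.choose (2*j) - (-1:ℤ)^j * M.choose j := by
    rw [Finset.sum_Ico_eq_sub _ (by omega)]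
    have h1 := alt_sum M (2*j)
    have h2 := alt_sum M j
    rw [show 2*j+1 = (2*j)+1 from rfl, h1, h2]
  rw [Finset.sum_Ico_eq_sum_range] at e2
  have e3 : 2*j+1 - (j+1) = j := by omega
  rw [e3] at e2
  have e4 : ∀ i, (-1:ℤ)^(1+i) * ((M+1).choose (j+(1+i)) : ℤ)
      = (-1:ℤ)^j * ((-1:ℤ)^(j+1+i) * (M+1).choose (j+1+i)) := by
    intro i
    rw [show j+1+i = j+(1+i) from by omega, pow_add]
    linear_combination (-((-1:ℤ)^(1+i) * ((M+1).choose (j+(1+i)) : ℤ))) * sq1 j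
  rw [show j+1-1 = j from rfl]
  rw [Finset.sum_congr rfl (fun i _ => e4 i), ← Finset.mul_sum, e2, np_even]
  linear_combination (-(M.choose j : ℤ)) * sq1 j






noncomputable def hf (M j i : ℕ) : ℤ :=
  (-1:ℤ)^(j+i) * ((1+2*(j:ℤ)) - 2*i) * ((M+1).choose i) * ((M+1).choose (2*j+1-i))

noncomputable def gf (M j k : ℕ) : ℤ :=
  (-1:ℤ)^k * (1 - 2*(k:ℤ)) * ((M+1).choose (j+k)) * ((M+1).choose (j-k+1))

lemma B_refl (M j : ℕ) :
    ∑ i ∈ range j, hf M j (1+i) = ∑ i ∈ range j, gf M j (1+i) := by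
  rw [← Finset.sum_range_reflect]
  apply Finset.sum_congr rfl
  intro i hi
  rw [Finset.mem_range] at hi
  rw [show 1 + (j-1-i) = j - i from by omega]
  unfold hf gf
  rw [show 2*j+1-(j-i) = j+1+i from by omega,
      show j+(1+i) = j+1+i from by omega,
      show j-(1+i)+1 = j-i from by omega,
      np (1+i) (j+(j-i)) (2*j+1) (by omega),
      pow_succ, np_even, one_mul]
  push_cast [show i ≤ j from by omega]
  ring

lemma B_shift (M j : ℕ) :
    ∑ i ∈ range j, hf M j (j+1+i) = ∑ i ∈ range j, gf M j (1+i) := by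
  apply Finset.sum_congr rfl
  intro i hi
  rw [Finset.mem_range] at hi
  unfold hf gf
  rw [show 2*j+1-(j+1+i) = j - i from by omega,
      show j-(1+i)+1 = j-i from by omega,
      show j+(1+i) = j+1+i from by omega,
      show j+(j+1+i) = 2*j+(1+i) from by omega,
      pow_add, np_even, one_mul]
  push_cast [show i ≤ j from by omega]
  ring

lemma R_total (M j : ℕ) :
    ∑ i ∈ range (2*j+2), hf M j i = 2*(M+1) * (M.choose j : ℤ) := by
  have hpt : ∀ i ∈ range (2*j+2), hf M j i
      = (-1:ℤ)^j * ((1+2*(j:ℤ)) * ((-1:ℤ)^i * ((M+1).choose i) * ((M+1).choose (2*j+1-i)))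
          - 2 * ((-1:ℤ)^i * (i:ℤ) * ((M+1).choose i) * ((M+1).choose (2*j+1-i)))) := by
    intro i _
    unfold hf
    rw [pow_add]
    ring
  rw [Finset.sum_congr rfl hpt, ← Finset.mul_sum]
  rw [Finset.sum_sub_distrib, ← Finset.mul_sum, ← Finset.mul_sum]
  rw [conv_odd (M+1) j, mul_zero]
  have hV : ∑ i ∈ range (2*j+2), (-1:ℤ)^i * (i:ℤ) * ((M+1).choose i) * ((M+1).choose (2*j+1-i))
      = -(M+1) * ((-1:ℤ)^j * M.choose j) := by
    rw [show 2*j+2 = (2*j+1)+1 from rfl, Finset.sum_range_succ']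
    simp only [Nat.cast_zero, mul_zero, zero_mul, add_zero]
    push_cast
    have hpt2 : ∀ i ∈ range (2*j+1),
        (-1:ℤ)^(i+1) * ((i:ℤ)+1) * ((M+1).choose (i+1)) * ((M+1).choose (2*j-i))
          = -(M+1) * ((-1:ℤ)^i * (M.choose i) * ((M+1).choose (2*j-i))) := by
      intro i _
      have hc : ((M+1 : ℕ) : ℤ) * (M.choose i : ℤ) = ((M+1).choose (i+1) : ℤ) * ((i:ℤ)+1) := by
        exact_mod_cast congrArg (Nat.cast : ℕ → ℤ) (Nat.add_one_mul_choose_eq M i)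
      rw [pow_succ]
      push_cast at hc ⊢
      linear_combination ((-1:ℤ)^i * ((M+1).choose (2*j-i) : ℤ)) * hc
    rw [Finset.sum_congr rfl hpt2, ← Finset.mul_sum, conv_even M j]
  rw [hV]
  push_cast
  linear_combination (2*((M:ℤ)+1) * (M.choose j : ℤ)) * sq1 j

lemma R_split (M j : ℕ) :
    ∑ i ∈ range (2*j+2), hf M j i
      = hf M j 0 + (∑ i ∈ range j, hf M j (1+i)) + (∑ i ∈ range j, hf M j (j+1+i)) + hf M j (2*j+1) := by
  rw [show 2*j+2 = (2*j+1)+1 from rfl, Finset.sum_range_succ, Finset.sum_range_succ']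
  have : ∑ i ∈ range (2*j), hf M j (i+1)
      = (∑ i ∈ range j, hf M j (1+i)) + (∑ i ∈ range j, hf M j (j+1+i)) := by
    rw [Finset.range_eq_Ico, ← Finset.sum_Ico_consecutive _ (Nat.zero_le j) (by omega : j ≤ 2*j),
      ← Finset.range_eq_Ico, Finset.sum_Ico_eq_sum_range]
    congr 1
    · exact Finset.sum_congr rfl fun i _ => by rw [show i+1 = 1+i from by omega]
    · rw [show 2*j - j = j from by omega]
      exact Finset.sum_congr rfl fun i _ => by rw [show j+i+1 = j+1+i from by omega]
  rw [this]
  ring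

lemma h_zero (M j : ℕ) : hf M j 0 = (-1:ℤ)^j * (1+2*(j:ℤ)) * ((M+1).choose (2*j+1)) := by
  unfold hf
  simp

lemma h_top (M j : ℕ) : hf M j (2*j+1) = (-1:ℤ)^j * (1+2*(j:ℤ)) * ((M+1).choose (2*j+1)) := by
  unfold hf
  rw [show 2*j+1-(2*j+1) = 0 from by omega, show j+(2*j+1) = 2*j+(j+1) from by omega,
    pow_add, np_even, one_mul, pow_succ]
  push_cast
  simp only [Nat.choose_zero_right, Nat.cast_one, mul_one]
  ring

theorem stmt_3 (m j : ℕ) (hm : 1 ≤ m) :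
    ∑ k ∈ Finset.Icc 1 j,
      (-1 : ℤ) ^ k * (m.choose (j + k)) *
        ((m : ℤ) + (1 - 2 * (k : ℤ)) * (m.choose (j - k + 1))) = 0 := by
  obtain ⟨M, rfl⟩ : ∃ M, m = M + 1 := ⟨m - 1, by omega⟩
  have hA : ∑ k ∈ Finset.Icc 1 j, (-1:ℤ)^k * ((M+1).choose (j+k) : ℤ)
      = (-1:ℤ)^j * M.choose (2*j) - M.choose j := by
    exact A_sum M j
  have hsplit : ∑ k ∈ Finset.Icc 1 j,
      (-1 : ℤ) ^ k * ((M+1).choose (j + k)) *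
        (((M+1) : ℤ) + (1 - 2 * (k : ℤ)) * ((M+1).choose (j - k + 1)))
      = ((M:ℤ)+1) * (∑ k ∈ Finset.Icc 1 j, (-1:ℤ)^k * ((M+1).choose (j+k) : ℤ))
        + ∑ k ∈ Finset.Icc 1 j, gf M j k := by
    rw [Finset.mul_sum, ← Finset.sum_add_distrib]
    apply Finset.sum_congr rfl
    intro k _
    unfold gf
    push_cast
    ring
  have hIcc : ∑ k ∈ Finset.Icc 1 j, gf M j k = ∑ i ∈ range j, gf M j (1+i) := by
    rw [show Finset.Icc 1 j = Finset.Ico 1 (j+1) from by rw [Finset.Ico_add_one_right_eq_Icc],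
      Finset.sum_Ico_eq_sum_range, show j+1-1 = j from rfl]
  have hB : 2 * (∑ k ∈ Finset.Icc 1 j, gf M j k)
      = 2*((M:ℤ)+1) * (M.choose j) - 2 * (-1:ℤ)^j * (1+2*(j:ℤ)) * ((M+1).choose (2*j+1)) := by
    have := R_total M j
    rw [R_split, h_zero, h_top, B_refl, B_shift, ← hIcc] at this
    push_cast at this ⊢
    linarith
  have hid : ((M:ℤ)+1) * (M.choose (2*j) : ℤ) = ((M+1).choose (2*j+1) : ℤ) * (2*(j:ℤ)+1) := by
    exact_mod_cast congrArg (Nat.cast : ℕ → ℤ) (Nat.add_one_mul_choose_eq M (2*j))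
  have h2 : 2 * (∑ k ∈ Finset.Icc 1 j,
      (-1 : ℤ) ^ k * ((M+1).choose (j + k)) *
        (((M+1) : ℤ) + (1 - 2 * (k : ℤ)) * ((M+1).choose (j - k + 1)))) = 0 := by
    rw [hsplit, mul_add, hA]
    push_cast
    linear_combination hB + 2*((-1:ℤ)^j) * hid
  have := h2
  push_cast at this ⊢
  linarith
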